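/- arXiv:math/0502096 — 3 statements merged into one kernel-verified Lean document; each statement's English description precedes it below -/
import Mathlib

section
/- Let p > 2, C > 0, g ≥ 0, and λ ∈ (0, 1). Consider h(r) = ((1−λ)/2) r² − (C/p) r^p − (λ/2) g² for r ≥ 0. Then for λ₁ := min{1/2, (1/(2g²))(1/2 − 1/p) r₀²} with r₀ := (1/(2C))^{1/(p−2)} (taking λ₁ = 1/2 if g = 0), and R := ((1−λ₁)/C)^{1/(p−2)}, one has: for all λ ∈ (0, λ₁), h(R) ≥ (λ₁/2) g² > 0 provided g > 0. -/
theorem stmt_3 (p C g : ℝ) (hp : 2 < p) (hC : 0 < C) (hg : 0 ≤ g) :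
    let r₀ : ℝ := (1 / (2 * C)) ^ (1 / (p - 2))
    let lam₁ : ℝ := if g = 0 then 1 / 2
      else min (1 / 2) ((1 / (2 * g ^ 2)) * (1 / 2 - 1 / p) * r₀ ^ 2)
    let R : ℝ := ((1 - lam₁) / C) ^ (1 / (p - 2))
    let h : ℝ → ℝ → ℝ := fun lam r =>
      (1 - lam) / 2 * r ^ 2 - C / p * r ^ p - lam / 2 * g ^ 2
    ∀ lam : ℝ, 0 < lam → lam < lam₁ →
      h lam R ≥ lam₁ / 2 * g ^ 2 ∧ (0 < g → 0 < lam₁ / 2 * g ^ 2) := by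
  intro r₀ lam₁ R h lam hlam hlamlt
  have hp0 : (0:ℝ) < p := by linarith
  have hp2 : (0:ℝ) < p - 2 := by linarith
  have he : (0:ℝ) < 1 / (p - 2) := by positivity
  have hx0 : (0:ℝ) < 1 / (2 * C) := by positivity
  have hr₀ : 0 < r₀ := Real.rpow_pos_of_pos hx0 _
  have hs : (0:ℝ) < 1 / 2 - 1 / p := by
    have h1 : 1 / p < 1 / 2 := one_div_lt_one_div_of_lt (by norm_num) hp
    linarith
  have hlam₁le : lam₁ ≤ 1 / 2 := by
    show (if g = 0 then (1:ℝ)/2 else _) ≤ 1/2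
    split
    · exact le_refl _
    · exact min_le_left _ _
  have hkey : lam₁ * g ^ 2 ≤ 1 / 2 * (1 / 2 - 1 / p) * r₀ ^ 2 := by
    by_cases hg0 : g = 0
    · have hl : lam₁ = 1 / 2 := if_pos hg0
      rw [hl, hg0]
      nlinarith [mul_nonneg (mul_nonneg (by norm_num : (0:ℝ) ≤ 1/2) hs.le) (sq_nonneg r₀)]
    · have hl : lam₁ = min (1 / 2) ((1 / (2 * g ^ 2)) * (1 / 2 - 1 / p) * r₀ ^ 2) :=
        if_neg hg0
      rw [hl]
      have hg2 : (0:ℝ) < g ^ 2 := by positivity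
      have := min_le_right (1/2 : ℝ) ((1 / (2 * g ^ 2)) * (1 / 2 - 1 / p) * r₀ ^ 2)
      have h2 : min (1/2 : ℝ) ((1 / (2 * g ^ 2)) * (1 / 2 - 1 / p) * r₀ ^ 2) * g ^ 2
          ≤ (1 / (2 * g ^ 2)) * (1 / 2 - 1 / p) * r₀ ^ 2 * g ^ 2 := by
        exact mul_le_mul_of_nonneg_right this hg2.le
      have h3 : (1 / (2 * g ^ 2)) * (1 / 2 - 1 / p) * r₀ ^ 2 * g ^ 2
          = 1 / 2 * (1 / 2 - 1 / p) * r₀ ^ 2 := by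
        field_simp
      linarith
  have hxpos : (0:ℝ) < (1 - lam₁) / C := by
    apply div_pos (by linarith) hC
  have hxle : 1 / (2 * C) ≤ (1 - lam₁) / C := by
    rw [div_le_div_iff₀ (by positivity) hC]
    nlinarith
  have hR0 : 0 < R := Real.rpow_pos_of_pos hxpos _
  have hRr : r₀ ≤ R := Real.rpow_le_rpow hx0.le hxle he.le
  have hRp : R ^ p = R ^ 2 * ((1 - lam₁) / C) := by
    show (((1 - lam₁) / C) ^ (1 / (p - 2))) ^ p = _
    rw [← Real.rpow_natCast (((1 - lam₁) / C) ^ (1 / (p - 2))) 2,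
      ← Real.rpow_mul hxpos.le, ← Real.rpow_mul hxpos.le]
    have : 1 / (p - 2) * p = 1 / (p - 2) * (2:ℕ) + 1 := by
      push_cast
      field_simp
      ring
    rw [this, Real.rpow_add hxpos, Real.rpow_one]
  constructor
  · show (1 - lam) / 2 * R ^ 2 - C / p * R ^ p - lam / 2 * g ^ 2 ≥ lam₁ / 2 * g ^ 2
    rw [hRp]
    have hid : C / p * (R ^ 2 * ((1 - lam₁) / C)) = (1 - lam₁) / p * R ^ 2 := by
      field_simp
    rw [hid]
    have hc : (1 / 2) * (1 / 2 - 1 / p) ≤ (1 - lam) / 2 - (1 - lam₁) / p := by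
      have h1 : (1 - lam₁) * (1 / 2 - 1 / p) = (1 - lam₁) / 2 - (1 - lam₁) / p := by ring
      have h2 : (1 / 2 : ℝ) * (1 / 2 - 1 / p) ≤ (1 - lam₁) * (1 / 2 - 1 / p) :=
        mul_le_mul_of_nonneg_right (by linarith) hs.le
      linarith
    have hr2 : r₀ ^ 2 ≤ R ^ 2 := pow_le_pow_left₀ hr₀.le hRr 2
    have hmul : (1 / 2) * (1 / 2 - 1 / p) * r₀ ^ 2
        ≤ ((1 - lam) / 2 - (1 - lam₁) / p) * R ^ 2 := by
      apply mul_le_mul hc hr2 (by positivity) (by linarith)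
    have hgg : lam / 2 * g ^ 2 ≤ lam₁ / 2 * g ^ 2 := by
      have := mul_le_mul_of_nonneg_right hlamlt.le (sq_nonneg g)
      nlinarith [sq_nonneg g]
    linarith
  · intro hgpos
    have hlam₁pos : 0 < lam₁ := lt_trans hlam hlamlt
    positivity
end

section
/- Let H be a real Hilbert space and F : H → ℝ a C¹ functional that is bounded below on the closed ball B̄_R = {u : ‖u‖ ≤ R}, and suppose there exists δ > 0 with F(u) ≥ δ for all u with ‖u‖ = R while inf_{B̄_R} F ≤ 0. Then there exists a sequence (u_n) ⊂ B̄_R with ‖u_n‖ < R for large n, F(u_n) → inf_{B̄_R} F, and ‖F'(u_n)‖ → 0. -/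
open Filter Set

/-- Weak form of Ekeland's variational principle. -/
theorem ekeland_aux {H : Type*} [NormedAddCommGroup H] [CompleteSpace H]
    (F : H → ℝ) (hFc : Continuous F) (K : Set H) (hK : IsClosed K)
    (hbdd : BddBelow (F '' K)) (ε : ℝ) (hε : 0 < ε) (u0 : H) (hu0 : u0 ∈ K) :
    ∃ v ∈ K, F v ≤ F u0 ∧ ∀ w ∈ K, F v ≤ F w + ε * ‖w - v‖ := by
  classical
  set S : H → Set H := fun u => {w | w ∈ K ∧ F w + ε * ‖w - u‖ ≤ F u} with hS
  have hSsub : ∀ u, S u ⊆ K := fun u w hw => hw.1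
  have hself : ∀ u ∈ K, u ∈ S u := fun u hu => by simp [hS, hu]
  have hSbdd : ∀ u, BddBelow (F '' S u) := fun u => hbdd.mono (image_mono (f := F) (hSsub u))
  have step : ∀ (n : ℕ) (u : H), u ∈ K →
      ∃ w, w ∈ S u ∧ F w < sInf (F '' S u) + (1/2 : ℝ) ^ n := by
    intro n u hu
    obtain ⟨y, hy, hylt⟩ := Real.lt_sInf_add_pos ((Set.nonempty_of_mem (hself u hu)).image F)
      (pow_pos (by norm_num : (0:ℝ) < 1/2) n)
    obtain ⟨w, hw, rfl⟩ := hy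
    exact ⟨w, hw, hylt⟩
  choose! f hf1 hf2 using step
  set a : ℕ → H := fun n => Nat.rec u0 (fun n u => f n u) n with ha
  have ha0 : a 0 = u0 := rfl
  have hasucc : ∀ n, a (n+1) = f n (a n) := fun n => rfl
  have hmem : ∀ n, a n ∈ K := by
    intro n; induction n with
    | zero => exact hu0
    | succ n ih => rw [hasucc]; exact hSsub _ (hf1 n (a n) ih)
  have hstep : ∀ n, F (a (n+1)) + ε * ‖a (n+1) - a n‖ ≤ F (a n) := by
    intro n; have h := (hf1 n (a n) (hmem n)).2; rw [hasucc]; exact h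
  have hanti : ∀ n, F (a (n+1)) ≤ F (a n) := by
    intro n
    have := hstep n
    nlinarith [norm_nonneg (a (n+1) - a n), hε.le]
  have hmono : Antitone fun n => F (a n) := antitone_nat_of_succ_le hanti
  have htele : ∀ n m, n ≤ m → ε * ‖a m - a n‖ ≤ F (a n) - F (a m) := by
    intro n m hnm
    induction m with
    | zero =>
      have : n = 0 := Nat.le_zero.mp hnm
      subst this; simp
    | succ m ih =>
      rcases Nat.lt_or_ge n (m+1) with h | h
      · have hnm' : n ≤ m := Nat.lt_succ_iff.mp h
        have h1 := ih hnm'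
        have h2 := hstep m
        have h3 : ‖a (m+1) - a n‖ ≤ ‖a (m+1) - a m‖ + ‖a m - a n‖ := by
          simpa [dist_eq_norm] using dist_triangle (a (m+1)) (a m) (a n)
        nlinarith [hε.le]
      · have : n = m + 1 := le_antisymm hnm h
        subst this; simp
  -- bounded below
  have hlb : ∀ n, sInf (F '' K) ≤ F (a n) := fun n => csInf_le hbdd ⟨a n, hmem n, rfl⟩
  have hFconv : ∃ L, Tendsto (fun n => F (a n)) atTop (nhds L) := by
    refine ⟨_, tendsto_atTop_ciInf hmono ⟨sInf (F '' K), ?_⟩⟩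
    rintro x ⟨n, rfl⟩; exact hlb n
  obtain ⟨L, hL⟩ := hFconv
  have hLle : ∀ n, L ≤ F (a n) := fun n =>
    le_of_tendsto hL (eventually_atTop.2 ⟨n, fun m hm => hmono hm⟩)
  have hcauchy : CauchySeq a := by
    apply cauchySeq_of_le_tendsto_0 (fun N => (F (a N) - L) / ε)
    · intro n m N hn hm
      rcases le_total n m with h | h
      · have := htele n m h
        rw [dist_eq_norm]
        have h1 : ‖a n - a m‖ = ‖a m - a n‖ := norm_sub_rev _ _
        rw [h1]
        have h2 : F (a n) ≤ F (a N) := hmono hn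
        have h3 : L ≤ F (a m) := hLle m
        rw [le_div_iff₀ hε]
        nlinarith
      · have := htele m n h
        rw [dist_eq_norm]
        have h2 : F (a m) ≤ F (a N) := hmono hm
        have h3 : L ≤ F (a n) := hLle n
        rw [le_div_iff₀ hε]
        nlinarith
    · have : Tendsto (fun N => F (a N) - L) atTop (nhds 0) := by
        simpa using hL.sub_const L
      simpa using this.div_const ε
  obtain ⟨v, hv⟩ := cauchySeq_tendsto_of_complete hcauchy
  have hvK : v ∈ K := hK.mem_of_tendsto hv (Eventually.of_forall hmem)
  have hFv : Tendsto (fun m => F (a m)) atTop (nhds (F v)) := (hFc.tendsto v).comp hv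
  have hFvL : F v = L := tendsto_nhds_unique hFv hL
  -- Claim A
  have hA : ∀ n, F v + ε * ‖v - a n‖ ≤ F (a n) := by
    intro n
    have htend : Tendsto (fun m => F (a m) + ε * ‖a m - a n‖) atTop
        (nhds (F v + ε * ‖v - a n‖)) := by
      exact hFv.add ((tendsto_const_nhds.mul ((hv.sub_const (a n)).norm)))
    refine le_of_tendsto htend (eventually_atTop.2 ⟨n, fun m hm => ?_⟩)
    have := htele n m hm
    linarith
  refine ⟨v, hvK, by have := hA 0; rw [ha0] at this; nlinarith [norm_nonneg (v - u0), hε.le], ?_⟩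
  intro w hw
  by_contra hcon
  push_neg at hcon
  have tri : ∀ x y z : H, ‖x - z‖ ≤ ‖x - y‖ + ‖y - z‖ := fun x y z => by
    simpa [dist_eq_norm] using dist_triangle x y z
  have hwS : ∀ n, w ∈ S (a n) := by
    intro n
    refine ⟨hw, ?_⟩
    have h1 := hA n
    have h2 := tri w v (a n)
    nlinarith [hε.le]
  have hwlt : ∀ n, F (a (n+1)) < F w + (1/2 : ℝ) ^ n := by
    intro n
    have h1 := hf2 n (a n) (hmem n)
    rw [← hasucc] at h1
    have hle : sInf (F '' S (a n)) ≤ F w := csInf_le (hSbdd _) ⟨w, hwS n, rfl⟩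
    linarith
  have hLw : L ≤ F w := by
    have h1 : Tendsto (fun n => F (a (n+1))) atTop (nhds L) :=
      hL.comp (tendsto_add_atTop_nat 1)
    have h2 : Tendsto (fun n : ℕ => F w + (1/2 : ℝ) ^ n) atTop (nhds (F w)) := by
      simpa using (tendsto_const_nhds (x := F w)).add
        (tendsto_pow_atTop_nhds_zero_of_lt_one (by norm_num) (by norm_num : (1/2:ℝ) < 1))
    exact le_of_tendsto_of_tendsto' h1 h2 fun n => (hwlt n).le
  rw [hFvL] at hcon
  nlinarith [norm_nonneg (w - v), hε.le]


theorem deriv_bound {H : Type*} [NormedAddCommGroup H] [NormedSpace ℝ H]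
    (F : H → ℝ) (hF : ContDiff ℝ 1 F) (R ε : ℝ) (hε : 0 ≤ ε) (u : H) (hu : ‖u‖ < R)
    (hek : ∀ w ∈ Metric.closedBall (0:H) R, F u ≤ F w + ε * ‖w - u‖) :
    ‖fderiv ℝ F u‖ ≤ ε := by
  have key : ∀ h : H, h ≠ 0 → -(ε * ‖h‖) ≤ fderiv ℝ F u h := by
    intro h hh
    have hhn : 0 < ‖h‖ := norm_pos_iff.mpr hh
    set t0 : ℝ := (R - ‖u‖) / ‖h‖ with ht0def
    have ht0 : 0 < t0 := div_pos (by linarith) hhn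
    have hd : HasFDerivAt F (fderiv ℝ F u) u := (hF.differentiable one_ne_zero u).hasFDerivAt
    have hd' : HasFDerivAt F (fderiv ℝ F u) (u + (0:ℝ) • h) := by simpa using hd
    have hc : HasDerivAt (fun t : ℝ => u + t • h) h 0 := by
      simpa using ((hasDerivAt_id (0:ℝ)).smul_const h).const_add u
    have hg : HasDerivAt (fun t : ℝ => F (u + t • h)) (fderiv ℝ F u h) 0 := by
      exact hd'.comp_hasDerivAt 0 hc
    rw [hasDerivAt_iff_tendsto_slope] at hg
    have hg' : Tendsto (slope (fun t : ℝ => F (u + t • h)) 0) (nhdsWithin 0 (Ioi 0))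
        (nhds (fderiv ℝ F u h)) :=
      hg.mono_left (nhdsWithin_mono 0 (fun t ht => ne_of_gt ht))
    refine ge_of_tendsto hg' ?_
    filter_upwards [Ioo_mem_nhdsGT_of_mem (⟨le_rfl, ht0⟩ : (0:ℝ) ∈ Ico 0 t0)] with t ht
    obtain ⟨ht1, ht2⟩ := ht
    have hw : u + t • h ∈ Metric.closedBall (0:H) R := by
      rw [Metric.mem_closedBall, dist_zero_right]
      have h1 : ‖u + t • h‖ ≤ ‖u‖ + t * ‖h‖ := by
        calc ‖u + t • h‖ ≤ ‖u‖ + ‖t • h‖ := norm_add_le _ _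
        _ = ‖u‖ + t * ‖h‖ := by rw [norm_smul, Real.norm_eq_abs, abs_of_pos ht1]
      have h2 : t * ‖h‖ ≤ R - ‖u‖ := by
        rw [← le_div_iff₀ hhn] at *
        exact ht2.le
      linarith
    have h3 := hek _ hw
    have h4 : ‖u + t • h - u‖ = t * ‖h‖ := by
      rw [add_sub_cancel_left, norm_smul, Real.norm_eq_abs, abs_of_pos ht1]
    rw [h4] at h3
    rw [slope_def_field]
    simp only [zero_smul, add_zero, sub_zero]
    rw [div_eq_inv_mul, le_inv_mul_iff₀ ht1]
    nlinarith
  refine ContinuousLinearMap.opNorm_le_bound _ hε fun h => ?_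
  rcases eq_or_ne h 0 with rfl | hh
  · simp
  · have k1 := key h hh
    have k2 := key (-h) (neg_ne_zero.mpr hh)
    rw [map_neg, norm_neg] at k2
    rw [Real.norm_eq_abs, abs_le]
    constructor <;> linarith


theorem stmt_4 {H : Type*} [NormedAddCommGroup H] [InnerProductSpace ℝ H]
    [CompleteSpace H]
    (F : H → ℝ) (hF : ContDiff ℝ 1 F) (R : ℝ) (hR : 0 < R)
    (hbdd : BddBelow (F '' Metric.closedBall (0 : H) R))
    (δ : ℝ) (hδ : 0 < δ) (hsphere : ∀ u : H, ‖u‖ = R → δ ≤ F u)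
    (hinf : sInf (F '' Metric.closedBall (0 : H) R) ≤ 0) :
    ∃ u : ℕ → H,
      (∀ n, ‖u n‖ ≤ R) ∧
      (∃ N : ℕ, ∀ n ≥ N, ‖u n‖ < R) ∧
      Tendsto (fun n => F (u n)) atTop
        (nhds (sInf (F '' Metric.closedBall (0 : H) R))) ∧
      Tendsto (fun n => ‖fderiv ℝ F (u n)‖) atTop (nhds 0) := by
  classical
  set K := Metric.closedBall (0 : H) R with hKdef
  set m := sInf (F '' K) with hmdef
  have h0K : (0:H) ∈ K := Metric.mem_closedBall_self hR.le
  have hne : (F '' K).Nonempty := ⟨F 0, 0, h0K, rfl⟩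
  have hsel : ∀ n : ℕ, ∃ v, v ∈ K ∧ F v < m + 1/(n+1) ∧
      ∀ w ∈ K, F v ≤ F w + (1/(n+1) : ℝ) * ‖w - v‖ := by
    intro n
    have hpos : (0:ℝ) < 1/(n+1) := by positivity
    obtain ⟨y, ⟨u0, hu0, rfl⟩, hy⟩ := Real.lt_sInf_add_pos hne hpos
    obtain ⟨v, hvK, hvle, hvek⟩ := ekeland_aux F hF.continuous K
      Metric.isClosed_closedBall hbdd _ hpos u0 hu0
    exact ⟨v, hvK, lt_of_le_of_lt hvle hy, hvek⟩
  choose u huK hulb huek using hsel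
  have hnorm : ∀ n, ‖u n‖ ≤ R := fun n => by
    simpa [hKdef, mem_closedBall_zero_iff] using huK n
  have hmle : ∀ n, m ≤ F (u n) := fun n => csInf_le hbdd ⟨u n, huK n, rfl⟩
  obtain ⟨N, hN⟩ := exists_nat_one_div_lt hδ
  have hsmall : ∀ n ≥ N, F (u n) < δ := by
    intro n hn
    have h1 : (1:ℝ)/(n+1) ≤ 1/(N+1) := by
      gcongr
    have := hulb n
    linarith
  have hlt : ∀ n ≥ N, ‖u n‖ < R := by
    intro n hn
    refine lt_of_le_of_ne (hnorm n) fun h => ?_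
    exact absurd (hsphere _ h) (not_le.mpr (hsmall n hn))
  refine ⟨u, hnorm, ⟨N, hlt⟩, ?_, ?_⟩
  · refine tendsto_of_tendsto_of_tendsto_of_le_of_le
      (tendsto_const_nhds) ?_ hmle (fun n => (hulb n).le)
    simpa using (tendsto_const_nhds (x := m)).add
      tendsto_one_div_add_atTop_nhds_zero_nat
  · refine squeeze_zero' (Eventually.of_forall fun n => norm_nonneg _) ?_
      tendsto_one_div_add_atTop_nhds_zero_nat
    filter_upwards [eventually_atTop.2 ⟨N, fun n hn => hlt n hn⟩] with n hn
    exact deriv_bound F hF R (1/(n+1)) (by positivity) (u n) hn (huek n)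
end

section
/- With H, p, K₀, N, I, S as above, suppose the infimum S₀ = inf_{u ≠ 0} ‖u‖²/(K₀N(u))^{2/p} is achieved at some U with K₀ N(U) = 1. Then ū := S₀^{1/(p−2)} U belongs to S, I(ū) = (1/2 − 1/p) S₀^{p/(p−2)}, and inf_{u ∈ S} I(u) = I(ū) = sup_{t ≥ 0} I(t ū). -/
theorem stmt_15 {H : Type*} [NormedAddCommGroup H] [InnerProductSpace ℝ H]
    (p K₀ : ℝ) (hp : 2 < p) (hK₀ : 0 < K₀)
    (N : H → ℝ) (hNcont : Continuous N)
    (hNhom : ∀ t : ℝ, 0 < t → ∀ u : H, N (t • u) = t ^ p * N u)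
    (hNpos : ∀ u : H, u ≠ 0 → 0 < N u)
    (S₀ : ℝ)
    (hS₀ : S₀ = sInf {y : ℝ | ∃ u : H, u ≠ 0 ∧ y = ‖u‖ ^ 2 / (K₀ * N u) ^ (2 / p)})
    (U : H) (hU : U ≠ 0) (hUnorm : K₀ * N U = 1)
    (hUach : ‖U‖ ^ 2 / (K₀ * N U) ^ (2 / p) = S₀) :
    let I : H → ℝ := fun u => ‖u‖ ^ 2 / 2 - K₀ * N u / p
    let ubar : H := (S₀ ^ (1 / (p - 2))) • U
    (ubar ≠ 0 ∧ ‖ubar‖ ^ 2 = K₀ * N ubar) ∧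
    I ubar = (1 / 2 - 1 / p) * S₀ ^ (p / (p - 2)) ∧
    sInf {y : ℝ | ∃ u : H, (u ≠ 0 ∧ ‖u‖ ^ 2 = K₀ * N u) ∧ y = I u} = I ubar ∧
    sSup {y : ℝ | ∃ t : ℝ, 0 ≤ t ∧ y = I (t • ubar)} = I ubar := by
  intro I ubar
  have hp0 : (0:ℝ) < p := by linarith
  have hp2 : (0:ℝ) < p - 2 := by linarith
  have hS₀U : S₀ = ‖U‖ ^ 2 := by
    rw [← hUach, hUnorm, Real.one_rpow, div_one]
  have hS₀pos : 0 < S₀ := by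
    rw [hS₀U]
    have : 0 < ‖U‖ := norm_pos_iff.mpr hU
    positivity
  set c : ℝ := S₀ ^ (1 / (p - 2)) with hc
  have hcpos : 0 < c := Real.rpow_pos_of_pos hS₀pos _
  set A : ℝ := S₀ ^ (p / (p - 2)) with hA
  have hApos : 0 < A := Real.rpow_pos_of_pos hS₀pos _
  -- N 0 = 0
  have hN0 : N 0 = 0 := by
    have h := hNhom 2 (by norm_num) 0
    rw [smul_zero] at h
    have h2 : (1:ℝ) < (2:ℝ) ^ p := by
      rw [show (1:ℝ) = (2:ℝ) ^ (0:ℝ) by simp]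
      exact (Real.rpow_lt_rpow_left_iff (by norm_num)).mpr hp0
    nlinarith [h, h2]
  -- key identities
  have hcp : c ^ p = A := by
    rw [hc, hA, ← Real.rpow_mul hS₀pos.le]
    congr 1
    field_simp
  have hc2 : c ^ 2 * S₀ = A := by
    have h1 : c ^ 2 = S₀ ^ (2 / (p - 2)) := by
      rw [hc, ← Real.rpow_natCast (S₀ ^ (1 / (p - 2))) 2, ← Real.rpow_mul hS₀pos.le]
      congr 1
      push_cast
      ring
    calc c ^ 2 * S₀ = S₀ ^ (2 / (p - 2)) * S₀ ^ (1:ℝ) := by rw [h1, Real.rpow_one]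
      _ = S₀ ^ (2 / (p - 2) + 1) := (Real.rpow_add hS₀pos _ _).symm
      _ = A := by rw [hA]; congr 1; field_simp; ring
  have hnubar : ‖ubar‖ ^ 2 = A := by
    show ‖c • U‖ ^ 2 = A
    rw [norm_smul, mul_pow, Real.norm_eq_abs, sq_abs, ← hS₀U, hc2]
  have hKubar : K₀ * N ubar = A := by
    show K₀ * N (c • U) = A
    rw [hNhom c hcpos U, ← hcp]
    nlinarith [hUnorm]
  have hIubar : I ubar = (1 / 2 - 1 / p) * A := by
    show ‖ubar‖ ^ 2 / 2 - K₀ * N ubar / p = (1 / 2 - 1 / p) * A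
    rw [hnubar, hKubar]; ring
  have hIubarpos : 0 < I ubar := by
    rw [hIubar]
    have : 0 < 1 / 2 - 1 / p := by
      rw [sub_pos, div_lt_div_iff₀ hp0 (by norm_num)]; linarith
    positivity
  refine ⟨⟨smul_ne_zero (ne_of_gt hcpos) hU, by rw [hnubar, hKubar]⟩, hIubar, ?_, ?_⟩
  · -- sInf part
    have hmem : I ubar ∈ {y : ℝ | ∃ u : H, (u ≠ 0 ∧ ‖u‖ ^ 2 = K₀ * N u) ∧ y = I u} :=
      ⟨ubar, ⟨smul_ne_zero (ne_of_gt hcpos) hU, by rw [hnubar, hKubar]⟩, rfl⟩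
    have hlb : ∀ y ∈ {y : ℝ | ∃ u : H, (u ≠ 0 ∧ ‖u‖ ^ 2 = K₀ * N u) ∧ y = I u},
        I ubar ≤ y := by
      rintro y ⟨u, ⟨hu0, hue⟩, rfl⟩
      have hbpos : 0 < ‖u‖ ^ 2 := by
        have : 0 < ‖u‖ := norm_pos_iff.mpr hu0
        positivity
      -- S₀ ≤ ‖u‖^2 / (K₀ N u)^(2/p) = (‖u‖^2)^((p-2)/p)
      have hS₀le : S₀ ≤ (‖u‖ ^ 2) ^ (1 - 2 / p) := by
        have hbdd : BddBelow {y : ℝ | ∃ u : H, u ≠ 0 ∧ y = ‖u‖ ^ 2 / (K₀ * N u) ^ (2 / p)} := by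
          refine ⟨0, ?_⟩
          rintro z ⟨v, hv, rfl⟩
          have := hNpos v hv
          positivity
      
        have hin : ‖u‖ ^ 2 / (K₀ * N u) ^ (2 / p)
            ∈ {y : ℝ | ∃ u : H, u ≠ 0 ∧ y = ‖u‖ ^ 2 / (K₀ * N u) ^ (2 / p)} := ⟨u, hu0, rfl⟩
        have h1 : S₀ ≤ ‖u‖ ^ 2 / (K₀ * N u) ^ (2 / p) := hS₀ ▸ csInf_le hbdd hin
        have h2 : ‖u‖ ^ 2 / (K₀ * N u) ^ (2 / p) = (‖u‖ ^ 2) ^ (1 - 2 / p) := by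
          rw [← hue, Real.rpow_sub hbpos, Real.rpow_one]
        linarith [h1, h2.symm.le, h2.le]
      have hble : A ≤ ‖u‖ ^ 2 := by
        have h3 : S₀ ^ (p / (p - 2)) ≤ ((‖u‖ ^ 2) ^ (1 - 2 / p)) ^ (p / (p - 2)) :=
          Real.rpow_le_rpow hS₀pos.le hS₀le (by positivity)
        have h4 : ((‖u‖ ^ 2) ^ (1 - 2 / p)) ^ (p / (p - 2)) = ‖u‖ ^ 2 := by
          rw [← Real.rpow_natCast (‖u‖) 2, ← Real.rpow_mul (norm_nonneg u),
            ← Real.rpow_mul (norm_nonneg u)]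
          congr 1
          push_cast
          field_simp
        rw [hA]
        calc S₀ ^ (p / (p - 2)) ≤ ((‖u‖ ^ 2) ^ (1 - 2 / p)) ^ (p / (p - 2)) := h3
          _ = ‖u‖ ^ 2 := h4
      have hIu : I u = (1 / 2 - 1 / p) * ‖u‖ ^ 2 := by
        show ‖u‖ ^ 2 / 2 - K₀ * N u / p = (1 / 2 - 1 / p) * ‖u‖ ^ 2
        rw [← hue]; ring
      rw [hIu, hIubar]
      have hw : 0 ≤ 1 / 2 - 1 / p := by
        rw [sub_nonneg, div_le_div_iff₀ hp0 (by norm_num)]; linarith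
      exact mul_le_mul_of_nonneg_left hble hw
    exact le_antisymm (csInf_le ⟨I ubar, hlb⟩ hmem) (le_csInf ⟨I ubar, hmem⟩ hlb)
  · -- sSup part
    have hmem : I ubar ∈ {y : ℝ | ∃ t : ℝ, 0 ≤ t ∧ y = I (t • ubar)} :=
      ⟨1, by norm_num, by rw [one_smul]⟩
    have hub : ∀ y ∈ {y : ℝ | ∃ t : ℝ, 0 ≤ t ∧ y = I (t • ubar)}, y ≤ I ubar := by
      rintro y ⟨t, ht, rfl⟩
      rcases eq_or_lt_of_le ht with h0 | htpos
      · have : I ((0:ℝ) • ubar) = 0 := by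
          show ‖(0:ℝ) • ubar‖ ^ 2 / 2 - K₀ * N ((0:ℝ) • ubar) / p = 0
          rw [zero_smul, hN0, norm_zero]
          ring
        rw [← h0, this]
        exact hIubarpos.le
      · -- Young's inequality: t^2 ≤ (2/p) t^p + (p-2)/p
        have hY : t ^ 2 ≤ 2 / p * t ^ p + (p - 2) / p := by
          have := Real.geom_mean_le_arith_mean2_weighted
            (w₁ := 2 / p) (w₂ := (p - 2) / p) (p₁ := t ^ p) (p₂ := 1)
            (by positivity) (by positivity) (by positivity) zero_le_one
            (by field_simp; ring)
          rw [Real.one_rpow, mul_one, mul_one] at this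
          have heq : (t ^ p) ^ (2 / p) = t ^ 2 := by
            rw [← Real.rpow_natCast t 2, ← Real.rpow_mul htpos.le]
            congr 1
            push_cast
            field_simp
          linarith [this, heq.le, heq.symm.le]
        have hg : t ^ 2 / 2 - t ^ p / p ≤ 1 / 2 - 1 / p := by
          have hq : p * p⁻¹ = 1 := mul_inv_cancel₀ hp0.ne'
          have h2 : (p - 2) / p = 1 - 2 * p⁻¹ := by field_simp
          rw [h2] at hY
          have h3 : 2 / p * t ^ p = 2 * (t ^ p * p⁻¹) := by ring
          rw [h3] at hY
          have h4 : t ^ p / p = t ^ p * p⁻¹ := by ring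
          rw [h4]
          have h5 : (1:ℝ) / p = p⁻¹ := one_div p
          rw [h5]
          linarith
        have hIt : I (t • ubar) = A * (t ^ 2 / 2 - t ^ p / p) := by
          show ‖t • ubar‖ ^ 2 / 2 - K₀ * N (t • ubar) / p = A * (t ^ 2 / 2 - t ^ p / p)
          rw [hNhom t htpos ubar, norm_smul, mul_pow, Real.norm_eq_abs, sq_abs]
          have : K₀ * (t ^ p * N ubar) = t ^ p * (K₀ * N ubar) := by ring
          rw [this, hKubar, hnubar]
          ring
        rw [hIt, hIubar]
        calc A * (t ^ 2 / 2 - t ^ p / p) ≤ A * (1 / 2 - 1 / p) :=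
              mul_le_mul_of_nonneg_left hg hApos.le
          _ = (1 / 2 - 1 / p) * A := by ring
    exact le_antisymm (csSup_le ⟨I ubar, hmem⟩ hub) (le_csSup ⟨I ubar, hub⟩ hmem)
end
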